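/- For every n > 2, the n-dimensional real algebra A with basis 1 = e_0, e_1, ..., e_{n−1}, and multiplication e_k e_{k+1} = e_{k+2}, e_{k+1} e_k = −e_{k+2} for 1 ≤ k ≤ n−3, e_m² = −1 for 1 ≤ m ≤ n−1, and e_p e_q = 0 for all other pairs, is a locally-complex algebra with l(A) = F_{n−1}, the (n−1)-th Fibonacci number. -/

import Mathlib

/-- Words in a finite subset `S` of a (not necessarily associative) unital algebra:
`IsWord S n a` means `a` is a product (with some bracketing) of `n` elements of `S`,
where `1` is the unique word of length `0`. -/
inductive IsWord {A : Type*} [NonAssocRing A] (S : Set A) : ℕ → A → Prop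
  | one : IsWord S 0 1
  | base : ∀ a, a ∈ S → IsWord S 1 a
  | mul : ∀ {m n : ℕ} {a b : A}, 0 < m → 0 < n → IsWord S m a → IsWord S n b →
      IsWord S (m + n) (a * b)

/-- `Lspan F S k` is the `F`-linear span of all words in `S` of length at most `k`. -/
def Lspan (F : Type*) {A : Type*} [Field F] [NonAssocRing A] [Module F A]
    (S : Set A) (k : ℕ) : Submodule F A :=
  Submodule.span F {a | ∃ m ≤ k, IsWord S m a}

/-- `S` generates the algebra `A` iff the union of all the `Lspan F S k` is all of `A`. -/
def Generates (F : Type*) {A : Type*} [Field F] [NonAssocRing A] [Module F A]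
    (S : Set A) : Prop :=
  (⨆ k, Lspan F S k) = ⊤

/-- The length of a generating set: the least `k` with `Lspan F S k = ⊤`. -/
noncomputable def len (F : Type*) {A : Type*} [Field F] [NonAssocRing A] [Module F A]
    (S : Set A) : ℕ :=
  sInf {k | Lspan F S k = ⊤}

/-- The length of the algebra: the maximum of `len F S` over all finite generating sets. -/
noncomputable def algLen (F : Type*) (A : Type*) [Field F] [NonAssocRing A] [Module F A] : ℕ :=
  sSup {l | ∃ S : Set A, S.Finite ∧ Generates F S ∧ len F S = l}

/-- `w` is a fresh word of length `n` in `S`: a word of length `n` lying in no `Lspan F S m`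
for `m < n`. -/
def Fresh (F : Type*) {A : Type*} [Field F] [NonAssocRing A] [Module F A]
    (S : Set A) (n : ℕ) (w : A) : Prop :=
  IsWord S n w ∧ ∀ m < n, w ∉ Lspan F S m

/-- `(m 0, m 1, …, m N)` is the characteristic sequence of `S`: a non-decreasing sequence
with `m 0 = 0` in which each `k ≥ 1` occurs exactly
`dim Lspan F S k − dim Lspan F S (k-1)` times. -/
def IsCharSeq (F : Type*) {A : Type*} [Field F] [NonAssocRing A] [Module F A]
    (S : Set A) (N : ℕ) (m : ℕ → ℕ) : Prop :=
  m 0 = 0 ∧ (∀ i j, i ≤ j → j ≤ N → m i ≤ m j) ∧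
  (∀ t, 1 ≤ t → t ≤ N → 1 ≤ m t) ∧
  ∀ k, 1 ≤ k →
    ((Finset.range (N + 1)).filter (fun t => m t = k)).card
      = Module.finrank F (Lspan F S k) - Module.finrank F (Lspan F S (k - 1))

/-- A locally-complex algebra: a finite-dimensional unital real (not necessarily associative)
algebra that is quadratic (every `a` satisfies `a² = u•1 + v•a`) and has no nontrivial
idempotents and no nonzero square-zero elements. -/
def LocallyComplex (A : Type*) [NonAssocRing A] [Module ℝ A] [SMulCommClass ℝ A A]
    [IsScalarTower ℝ A A] : Prop :=
  FiniteDimensional ℝ A ∧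
  (∀ a : A, ∃ u v : ℝ, a * a = u • (1 : A) + v • a) ∧
  (∀ a : A, a * a = a → a = 0 ∨ a = 1) ∧
  (∀ a : A, a * a = 0 → a = 0)

/-- A bundled (not necessarily associative) unital `F`-algebra. -/
structure AlgWitness (F : Type*) [Field F] where
  carrier : Type
  [ring : NonAssocRing carrier]
  [mod : Module F carrier]
  [scc : SMulCommClass F carrier carrier]
  [ist : IsScalarTower F carrier carrier]

attribute [instance] AlgWitness.ring AlgWitness.mod AlgWitness.scc AlgWitness.ist



structure Av (n : ℕ) : Type where
  fn : Fin n → ℝ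

namespace Av
variable {n : ℕ}

@[ext] lemma ext' {a b : Av n} (h : ∀ i, a.fn i = b.fn i) : a = b := by
  cases a; cases b; simp only [mk.injEq]; funext i; exact h i

/-- `ℕ`-indexed coordinates, zero outside range. -/
def c (a : Av n) (m : ℕ) : ℝ := if h : m < n then a.fn ⟨m, h⟩ else 0

lemma fn_eq_c (a : Av n) (i : Fin n) : a.fn i = c a i.val := by
  simp [c, i.isLt]

lemma ext_c {a b : Av n} (h : ∀ m, m < n → c a m = c b m) : a = b := by
  ext i; rw [fn_eq_c, fn_eq_c]; exact h i.val i.isLt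

instance : Zero (Av n) := ⟨⟨fun _ => 0⟩⟩
instance : Add (Av n) := ⟨fun a b => ⟨fun i => a.fn i + b.fn i⟩⟩
instance : Neg (Av n) := ⟨fun a => ⟨fun i => -(a.fn i)⟩⟩
instance : SMul ℝ (Av n) := ⟨fun r a => ⟨fun i => r * a.fn i⟩⟩

lemma zero_fn (i : Fin n) : (0 : Av n).fn i = 0 := rfl
lemma add_fn (a b : Av n) (i : Fin n) : (a + b).fn i = a.fn i + b.fn i := rfl
lemma neg_fn (a : Av n) (i : Fin n) : (-a).fn i = -(a.fn i) := rfl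
lemma smul_fn (r : ℝ) (a : Av n) (i : Fin n) : (r • a).fn i = r * a.fn i := rfl

instance : AddCommGroup (Av n) where
  add_assoc a b c := by ext i; simp [add_fn]; ring
  zero_add a := by ext i; simp [add_fn, zero_fn]
  add_zero a := by ext i; simp [add_fn, zero_fn]
  add_comm a b := by ext i; simp [add_fn]; ring
  neg_add_cancel a := by ext i; simp [add_fn, neg_fn, zero_fn]
  nsmul := nsmulRec
  zsmul := zsmulRec

instance : Module ℝ (Av n) where
  one_smul a := by ext i; simp [smul_fn]
  mul_smul r s a := by ext i; simp [smul_fn]; ring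
  smul_zero r := by ext i; simp [smul_fn, zero_fn]
  smul_add r a b := by ext i; simp [smul_fn, add_fn]; ring
  add_smul r s a := by ext i; simp [smul_fn, add_fn]; ring
  zero_smul a := by ext i; simp [smul_fn, zero_fn]

/-- the basis elements (`ev 0` is the unit). -/
def ev (m : ℕ) : Av n := ⟨fun i => if i.val = m then 1 else 0⟩

instance : One (Av n) := ⟨ev 0⟩
instance : Mul (Av n) := ⟨fun a b => ⟨fun i =>
  c a 0 * b.fn i + c b 0 * a.fn i
  - (if i.val = 0 then ∑ j, a.fn j * b.fn j else 0)
  + (if 3 ≤ i.val then c a (i.val - 2) * c b (i.val - 1) - c a (i.val - 1) * c b (i.val - 2) else 0)⟩⟩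

lemma one_def : (1 : Av n) = ev 0 := rfl

lemma mul_fn (a b : Av n) (i : Fin n) : (a * b).fn i =
  c a 0 * b.fn i + c b 0 * a.fn i
  - (if i.val = 0 then ∑ j, a.fn j * b.fn j else 0)
  + (if 3 ≤ i.val then c a (i.val - 2) * c b (i.val - 1) - c a (i.val - 1) * c b (i.val - 2) else 0) := rfl

lemma c_zero (m : ℕ) : c (0 : Av n) m = 0 := by simp [c, zero_fn]
lemma c_add (a b : Av n) (m : ℕ) : c (a + b) m = c a m + c b m := by
  simp only [c]; split_ifs <;> simp [add_fn]
lemma c_neg (a : Av n) (m : ℕ) : c (-a) m = -(c a m) := by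
  simp only [c]; split_ifs <;> simp [neg_fn]
lemma c_smul (r : ℝ) (a : Av n) (m : ℕ) : c (r • a) m = r * c a m := by
  simp only [c]; split_ifs <;> simp [smul_fn]
lemma c_ev (p m : ℕ) : c (ev p : Av n) m = if m = p ∧ m < n then 1 else 0 := by
  simp only [c, ev]; split_ifs with h1 h2 h3 <;> simp_all <;> omega
lemma c_ev_of_lt (p m : ℕ) (hm : m < n) : c (ev p : Av n) m = if m = p then 1 else 0 := by
  rw [c_ev]; split_ifs <;> simp_all

lemma c_mul (a b : Av n) (m : ℕ) (hm : m < n) : c (a * b) m =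
  c a 0 * c b m + c b 0 * c a m
  - (if m = 0 then ∑ j, a.fn j * b.fn j else 0)
  + (if 3 ≤ m then c a (m - 2) * c b (m - 1) - c a (m - 1) * c b (m - 2) else 0) := by
  have : c (a * b) m = (a * b).fn ⟨m, hm⟩ := by simp [c, hm]
  rw [this, mul_fn, fn_eq_c a ⟨m, hm⟩, fn_eq_c b ⟨m, hm⟩]



lemma sum_ev_left (a : Av n) (p : ℕ) (hp : p < n) :
    ∑ j, (ev p : Av n).fn j * a.fn j = c a p := by
  rw [Finset.sum_eq_single ⟨p, hp⟩]
  · simp [ev, c, hp]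
  · intro j _ hj
    have : j.val ≠ p := by
      intro h; apply hj; apply Fin.ext; exact h
    simp [ev, this]
  · intro h; exact absurd (Finset.mem_univ _) h

lemma sum_ev_right (a : Av n) (p : ℕ) (hp : p < n) :
    ∑ j, a.fn j * (ev p : Av n).fn j = c a p := by
  rw [Finset.sum_eq_single ⟨p, hp⟩]
  · simp [ev, c, hp]
  · intro j _ hj
    have : j.val ≠ p := by
      intro h; apply hj; apply Fin.ext; exact h
    simp [ev, this]
  · intro h; exact absurd (Finset.mem_univ _) h

instance : NonAssocRing (Av n) where
  left_distrib a b c := by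
    ext i
    simp only [mul_fn, add_fn, c_add, mul_add, add_mul, Finset.sum_add_distrib]
    split_ifs <;> ring
  right_distrib a b c := by
    ext i
    simp only [mul_fn, add_fn, c_add, mul_add, add_mul, Finset.sum_add_distrib]
    split_ifs <;> ring
  zero_mul a := by
    ext i
    simp only [mul_fn, zero_fn, c_zero, zero_mul, mul_zero, Finset.sum_const_zero]
    split_ifs <;> ring
  mul_zero a := by
    ext i
    simp only [mul_fn, zero_fn, c_zero, zero_mul, mul_zero, Finset.sum_const_zero]
    split_ifs <;> ring
  one_mul a := by
    apply ext_c; intro m hm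
    have h0 : (0:ℕ) < n := lt_of_le_of_lt (Nat.zero_le m) hm
    rw [c_mul _ _ _ hm, one_def]
    rw [show (∑ j, (ev 0 : Av n).fn j * a.fn j) = c a 0 from sum_ev_left a 0 h0]
    simp only [c_ev]
    split_ifs <;> simp_all <;> omega
  mul_one a := by
    apply ext_c; intro m hm
    have h0 : (0:ℕ) < n := lt_of_le_of_lt (Nat.zero_le m) hm
    rw [c_mul _ _ _ hm, one_def]
    rw [show (∑ j, a.fn j * (ev 0 : Av n).fn j) = c a 0 from sum_ev_right a 0 h0]
    simp only [c_ev]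
    split_ifs <;> simp_all <;> omega

instance : SMulCommClass ℝ (Av n) (Av n) where
  smul_comm r a b := by
    show r • (a * b) = a * (r • b)
    apply ext_c; intro m hm
    have hs : ∑ j, a.fn j * (r • b).fn j = r * ∑ j, a.fn j * b.fn j := by
      rw [Finset.mul_sum]; apply Finset.sum_congr rfl; intros; rw [smul_fn]; ring
    rw [c_smul, c_mul _ _ _ hm, c_mul _ _ _ hm, hs]
    simp only [c_smul]
    split_ifs <;> ring

instance : IsScalarTower ℝ (Av n) (Av n) where
  smul_assoc r a b := by
    show (r • a) * b = r • (a * b)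
    apply ext_c; intro m hm
    have hs : ∑ j, (r • a).fn j * b.fn j = r * ∑ j, a.fn j * b.fn j := by
      rw [Finset.mul_sum]; apply Finset.sum_congr rfl; intros; rw [smul_fn]; ring
    rw [c_mul _ _ _ hm, hs]
    simp only [c_smul]
    rw [c_mul _ _ _ hm]
    split_ifs <;> ring

lemma sum_ev_ev (p q : ℕ) (hp' : p < n) :
    ∑ j, (ev p : Av n).fn j * (ev q : Av n).fn j = if p = q then 1 else 0 := by
  rw [sum_ev_left _ p hp', c_ev]
  split_ifs <;> simp_all <;> omega

set_option maxHeartbeats 1000000 in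
lemma ev_mul_ev (p q : ℕ) (hp : 1 ≤ p) (hp' : p < n) (hq : 1 ≤ q) (hq' : q < n) :
    (ev p : Av n) * ev q =
      if p = q then -1
      else if q = p + 1 ∧ p + 2 < n then ev (p+2)
      else if p = q + 1 ∧ q + 2 < n then -(ev (q+2))
      else 0 := by
  have lhs : ∀ m, m < n → c ((ev p : Av n) * ev q) m
      = - (if m = 0 then (if p = q then (1:ℝ) else 0) else 0)
      + (if 3 ≤ m then (if m - 2 = p then (1:ℝ) else 0) * (if m - 1 = q then 1 else 0)
          - (if m - 1 = p then (1:ℝ) else 0) * (if m - 2 = q then 1 else 0) else 0) := by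
    intro m hm
    have e1 : c (ev p : Av n) 0 = 0 := by rw [c_ev]; rw [if_neg]; rintro ⟨h, -⟩; omega
    have e2 : c (ev q : Av n) 0 = 0 := by rw [c_ev]; rw [if_neg]; rintro ⟨h, -⟩; omega
    rw [c_mul _ _ _ hm, sum_ev_ev p q hp', e1, e2,
      c_ev_of_lt _ _ hm, c_ev_of_lt _ _ hm,
      c_ev_of_lt p (m-2) (by omega), c_ev_of_lt q (m-1) (by omega),
      c_ev_of_lt p (m-1) (by omega), c_ev_of_lt q (m-2) (by omega)]
    ring
  split_ifs with h1 h2 h3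
  · subst h1
    apply ext_c; intro m hm
    rw [lhs m hm, c_neg, one_def, c_ev_of_lt _ _ hm]
    split_ifs <;> first | (exfalso; omega) | norm_num
  · obtain ⟨rfl, h2'⟩ := h2
    apply ext_c; intro m hm
    rw [lhs m hm, c_ev_of_lt _ _ hm]
    split_ifs <;> first | (exfalso; omega) | norm_num
  · obtain ⟨rfl, h3'⟩ := h3
    apply ext_c; intro m hm
    rw [lhs m hm, c_neg, c_ev_of_lt _ _ hm]
    split_ifs <;> first | (exfalso; omega) | norm_num
  · apply ext_c; intro m hm
    rw [lhs m hm, c_zero]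
    split_ifs <;> first | (exfalso; omega) | norm_num

lemma mul_self_eq (a : Av n) :
    a * a = (-(∑ j, a.fn j * a.fn j)) • (1 : Av n) + (2 * c a 0) • a := by
  apply ext_c; intro m hm
  rw [c_mul _ _ _ hm, c_add, c_smul, c_smul, one_def, c_ev]
  have hw : (if 3 ≤ m then c a (m - 2) * c a (m - 1) - c a (m - 1) * c a (m - 2) else 0) = 0 := by
    split_ifs <;> ring
  rw [hw]
  split_ifs <;> first | (exfalso; omega) | ring

lemma sum_sq_of_tail_zero (a : Av n) (hn0 : 0 < n)
    (h : ∀ m, 1 ≤ m → m < n → c a m = 0) :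
    ∑ j, a.fn j * a.fn j = c a 0 * c a 0 := by
  rw [Finset.sum_eq_single ⟨0, hn0⟩]
  · simp [fn_eq_c]
  · intro j _ hj
    have hj' : 1 ≤ j.val := by
      rcases Nat.eq_zero_or_pos j.val with h0 | h0
      · exact absurd (Fin.ext h0) hj
      · exact h0
    rw [fn_eq_c, h j.val hj' j.isLt]; ring
  · intro h; exact absurd (Finset.mem_univ _) h

lemma sum_sq_zero (a : Av n) (h : ∑ j, a.fn j * a.fn j = 0) : a = 0 := by
  ext i
  have := Finset.sum_eq_zero_iff_of_nonneg (fun j _ => mul_self_nonneg (a.fn j)) |>.mp h i (Finset.mem_univ i)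
  have := mul_self_eq_zero.mp this
  simp [this, zero_fn]

/-- coordinate functional -/
def cL (m : ℕ) : Av n →ₗ[ℝ] ℝ where
  toFun a := c a m
  map_add' a b := c_add a b m
  map_smul' r a := by simp [c_smul]

@[simp] lemma cL_apply (m : ℕ) (a : Av n) : cL m a = c a m := rfl

noncomputable def toPi : Av n ≃ₗ[ℝ] (Fin n → ℝ) where
  toFun := fn
  invFun := mk
  map_add' _ _ := rfl
  map_smul' _ _ := rfl
  left_inv a := rfl
  right_inv f := rfl

instance : FiniteDimensional ℝ (Av n) := LinearEquiv.finiteDimensional (toPi (n := n)).symm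

lemma finrank_eq : Module.finrank ℝ (Av n) = n := by
  rw [(toPi (n := n)).finrank_eq]
  simp

lemma ev_linearIndependent : LinearIndependent ℝ (fun i : Fin n => (ev i.val : Av n)) := by
  rw [Fintype.linearIndependent_iff]
  intro g hg i
  have h2 := congrArg (cL i.val) hg
  rw [map_sum, map_zero] at h2
  rw [Finset.sum_eq_single i] at h2
  · simpa [c_ev, i.isLt] using h2
  · intro j _ hj
    have : i.val ≠ j.val := fun h => hj (Fin.ext h.symm)
    simp [c_smul, c_ev, this]
  · intro h; exact absurd (Finset.mem_univ _) h

lemma eq_sum_ev (a : Av n) : a = ∑ i : Fin n, a.fn i • (ev i.val : Av n) := by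
  apply ext_c; intro m hm
  have : c (∑ i : Fin n, a.fn i • (ev i.val : Av n)) m
      = ∑ i : Fin n, a.fn i * c (ev i.val : Av n) m := by
    rw [← cL_apply, map_sum]; apply Finset.sum_congr rfl; intros; simp [c_smul]
  rw [this, Finset.sum_eq_single ⟨m, hm⟩]
  · simp [c_ev, hm, fn_eq_c]
  · intro j _ hj
    have : m ≠ j.val := fun h => hj (Fin.ext h.symm)
    simp [c_ev, this]
  · intro h; exact absurd (Finset.mem_univ _) h

lemma ev_span_top : Submodule.span ℝ (Set.range (fun i : Fin n => (ev i.val : Av n))) = ⊤ := by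
  rw [eq_top_iff]
  intro a _
  rw [eq_sum_ev a]
  exact Submodule.sum_mem _ fun i _ =>
    Submodule.smul_mem _ _ (Submodule.subset_span ⟨i, rfl⟩)

lemma quadratic (a : Av n) : ∃ u v : ℝ, a * a = u • (1 : Av n) + v • a :=
  ⟨-(∑ j, a.fn j * a.fn j), 2 * c a 0, mul_self_eq a⟩

lemma no_idem (hn0 : 0 < n) (a : Av n) (h : a * a = a) : a = 0 ∨ a = 1 := by
  have h' := h
  rw [mul_self_eq a] at h'
  set s := ∑ j, a.fn j * a.fn j with hs
  set t := c a 0 with ht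
  have H : ∀ m, m < n → -s * (if m = 0 then (1:ℝ) else 0) + (2*t) * c a m = c a m := by
    intro m hm
    have h2 := congrArg (cL m) h'
    simp only [cL_apply, c_add, c_smul, one_def, c_ev_of_lt _ _ hm] at h2
    linarith [h2]
  by_cases h1 : (2:ℝ) * t = 1
  · exfalso
    have h0 := H 0 hn0
    rw [if_pos rfl] at h0
    have hs0 : s = 0 := by nlinarith [h0, h1]
    have ha0 : a = 0 := sum_sq_zero a hs0
    have : t = 0 := by rw [ht, ha0, c_zero]
    rw [this] at h1; norm_num at h1
  · have tail : ∀ m, 1 ≤ m → m < n → c a m = 0 := by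
      intro m h1m hm
      have hH := H m hm
      rw [if_neg (by omega)] at hH
      have h3 : (2*t - 1) * c a m = 0 := by linarith
      rcases mul_eq_zero.mp h3 with h4 | h4
      · exact absurd (by linarith : (2:ℝ)*t = 1) h1
      · exact h4
    have hseq : s = t * t := sum_sq_of_tail_zero a hn0 tail
    have h0 := H 0 hn0
    rw [if_pos rfl] at h0
    have htt : t * (t - 1) = 0 := by nlinarith [h0, hseq]
    rcases mul_eq_zero.mp htt with h4 | h4
    · left
      apply ext_c; intro m hm
      rw [c_zero]
      rcases Nat.eq_zero_or_pos m with rfl | hm1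
      · rw [← ht, h4]
      · exact tail m hm1 hm
    · right
      apply ext_c; intro m hm
      rw [one_def, c_ev_of_lt _ _ hm]
      rcases Nat.eq_zero_or_pos m with rfl | hm1
      · rw [← ht, if_pos rfl]; linarith
      · rw [tail m hm1 hm, if_neg (by omega)]
  
lemma no_sqzero (hn0 : 0 < n) (a : Av n) (h : a * a = 0) : a = 0 := by
  have h' := h
  rw [mul_self_eq a] at h'
  set s := ∑ j, a.fn j * a.fn j with hs
  set t := c a 0 with ht
  have H : ∀ m, m < n → -s * (if m = 0 then (1:ℝ) else 0) + (2*t) * c a m = 0 := by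
    intro m hm
    have h2 := congrArg (cL m) h'
    simp only [cL_apply, c_add, c_smul, c_zero, one_def, c_ev_of_lt _ _ hm] at h2
    linarith [h2]
  by_cases h1 : t = 0
  · have h0 := H 0 hn0
    rw [if_pos rfl] at h0
    have hs0 : s = 0 := by rw [← ht] at h0; nlinarith [h0]
    exact sum_sq_zero a hs0
  · exfalso
    have tail : ∀ m, 1 ≤ m → m < n → c a m = 0 := by
      intro m h1m hm
      have hH := H m hm
      rw [if_neg (by omega)] at hH
      have h3 : (2*t) * c a m = 0 := by linarith
      rcases mul_eq_zero.mp h3 with h4 | h4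
      · exact absurd (by linarith : t = 0) h1
      · exact h4
    have hseq : s = t * t := sum_sq_of_tail_zero a hn0 tail
    have h0 := H 0 hn0
    rw [if_pos rfl] at h0
    have : t * t = 0 := by nlinarith [h0, hseq]
    exact h1 (by nlinarith [this])

end Av

section Words
variable {F : Type*} {A : Type*} [Field F] [NonAssocRing A] [Module F A]
  [SMulCommClass F A A] [IsScalarTower F A A] {S : Set A}

lemma Lspan_mono {k k' : ℕ} (h : k ≤ k') : Lspan F S k ≤ Lspan F S k' :=
  Submodule.span_mono (fun a ⟨m, hm, hw⟩ => ⟨m, hm.trans h, hw⟩)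

lemma word_mem_Lspan {m k : ℕ} {a : A} (hw : IsWord S m a) (hm : m ≤ k) :
    a ∈ Lspan F S k := Submodule.subset_span ⟨m, hm, hw⟩

lemma one_mem_Lspan {k : ℕ} : (1 : A) ∈ Lspan F S k :=
  word_mem_Lspan IsWord.one (Nat.zero_le k)

lemma IsWord.eq_one_of_zero {k : ℕ} {a : A} (h : IsWord S k a) (hk : k = 0) : a = 1 := by
  induction h with
  | one => rfl
  | base a ha => exact absurd hk (by omega)
  | mul hm hn _ _ _ _ => exact absurd hk (by omega)

lemma IsWord.zero_eq {a : A} (h : IsWord S 0 a) : a = 1 := h.eq_one_of_zero rfl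

lemma Lspan_mul_mem {p q : ℕ} {a b : A}
    (ha : a ∈ Lspan F S p) (hb : b ∈ Lspan F S q) : a * b ∈ Lspan F S (p + q) := by
  have key : ∀ x : A, (∃ m ≤ p, IsWord S m x) → ∀ y ∈ Lspan F S q, x * y ∈ Lspan F S (p + q) := by
    rintro x ⟨m₁, hm₁, hw₁⟩ y hy
    refine Submodule.span_induction ?_ ?_ ?_ ?_ hy
    · rintro z ⟨m₂, hm₂, hw₂⟩
      rcases Nat.eq_zero_or_pos m₁ with rfl | h₁
      · rw [hw₁.zero_eq, one_mul]
        exact word_mem_Lspan hw₂ (hm₂.trans (Nat.le_add_left _ _))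
      rcases Nat.eq_zero_or_pos m₂ with rfl | h₂
      · rw [hw₂.zero_eq, mul_one]
        exact word_mem_Lspan hw₁ (hm₁.trans (Nat.le_add_right _ _))
      · exact word_mem_Lspan (IsWord.mul h₁ h₂ hw₁ hw₂) (Nat.add_le_add hm₁ hm₂)
    · rw [mul_zero]; exact Submodule.zero_mem _
    · intro u v _ _ hu hv; rw [mul_add]; exact Submodule.add_mem _ hu hv
    · intro r u _ hu; rw [mul_smul_comm]; exact Submodule.smul_mem _ _ hu
  refine Submodule.span_induction ?_ ?_ ?_ ?_ ha
  · intro x hx; exact key x hx b hb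
  · rw [zero_mul]; exact Submodule.zero_mem _
  · intro u v _ _ hu hv; rw [add_mul]; exact Submodule.add_mem _ hu hv
  · intro r u _ hu; rw [smul_mul_assoc]; exact Submodule.smul_mem _ _ hu

end Words

namespace Av
variable {n : ℕ}

lemma ev_eq_zero {m : ℕ} (h : n ≤ m) : (ev m : Av n) = 0 := by
  apply ext_c; intro j hj
  rw [c_ev, c_zero, if_neg]; rintro ⟨rfl, -⟩; omega

/-- projection onto the coordinates of `e 1, e 2`. -/
noncomputable def piP : Av n →ₗ[ℝ] (Fin 2 → ℝ) := LinearMap.pi fun j => cL (j.val + 1)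

@[simp] lemma piP_apply (a : Av n) (j : Fin 2) : piP a j = c a (j.val + 1) := rfl

lemma c12_mul (hn : 2 < n) (a b : Av n) {m : ℕ} (hm : m = 1 ∨ m = 2) :
    c (a * b) m = c a 0 * c b m + c b 0 * c a m := by
  rw [c_mul _ _ _ (by omega), if_neg (by omega), if_neg (by omega)]
  ring

lemma word_piP_mem (hn : 2 < n) {S : Set (Av n)} {m : ℕ} {a : Av n}
    (h : IsWord S m a) : piP a ∈ Submodule.span ℝ (piP '' S) := by
  induction h with
  | one =>
    have : piP (1 : Av n) = 0 := by
      funext j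
      have : (j.val + 1 = 1 ∨ j.val + 1 = 2) := by omega
      rw [piP_apply, one_def, c_ev, if_neg]
      · rfl
      · rintro ⟨h1, -⟩; omega
    rw [this]; exact Submodule.zero_mem _
  | base a ha => exact Submodule.subset_span ⟨a, ha, rfl⟩
  | mul hp hq hwa hwb iha ihb =>
    rename_i p q a b
    have : piP (a * b) = c a 0 • piP b + c b 0 • piP a := by
      funext j
      have hj : (j.val + 1 = 1 ∨ j.val + 1 = 2) := by omega
      simp only [Pi.add_apply, Pi.smul_apply, piP_apply, smul_eq_mul]
      rw [c12_mul hn a b hj]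
    rw [this]
    exact Submodule.add_mem _ (Submodule.smul_mem _ _ ihb) (Submodule.smul_mem _ _ iha)

lemma piP_span_top (hn : 2 < n) {S : Set (Av n)} (hgen : Generates ℝ S) :
    Submodule.span ℝ (piP '' S) = ⊤ := by
  have hcomap : ∀ k, Lspan ℝ S k ≤ (Submodule.span ℝ (piP '' S)).comap piP := by
    intro k
    rw [Lspan, Submodule.span_le]
    rintro a ⟨m, -, hw⟩
    exact word_piP_mem hn hw
  have htop : (⊤ : Submodule ℝ (Av n)) ≤ (Submodule.span ℝ (piP '' S)).comap piP := by
    rw [← hgen]; exact iSup_le hcomap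
  rw [eq_top_iff]
  intro x _
  set a : Av n := x 0 • ev 1 + x 1 • ev 2 with ha
  have hx : piP a = x := by
    funext j
    rw [piP_apply, ha, c_add, c_smul, c_smul, c_ev, c_ev]
    fin_cases j <;> simp <;> intro h <;> exact absurd h (by omega)
  rw [← hx]
  exact htop (Submodule.mem_top) 

lemma triangular (hn : 2 < n) {S : Set (Av n)}
    (hS : Submodule.span ℝ (piP '' S) = ⊤) :
    ∀ m, 1 ≤ m → m < n → ∃ v ∈ Lspan ℝ S (Nat.fib m),
      (∀ j, j < m → c v j = 0) ∧ c v m = 1 := by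
  have base : ∀ m, m = 1 ∨ m = 2 → ∃ v ∈ Lspan ℝ S (Nat.fib m),
      (∀ j, j < m → c v j = 0) ∧ c v m = 1 := by
    intro m hm
    have ht : m - 1 < 2 := by omega
    have hsingle : Pi.single (⟨m - 1, ht⟩ : Fin 2) (1:ℝ) ∈ Submodule.span ℝ (piP '' S) := by
      rw [hS]; trivial
    rw [Submodule.span_image] at hsingle
    obtain ⟨w, hw, hpw⟩ := Submodule.mem_map.mp hsingle
    have hwL : w ∈ Lspan ℝ S 1 := by
      refine Submodule.span_le.mpr ?_ hw
      intro x hx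
      exact Submodule.subset_span ⟨1, le_refl 1, IsWord.base x hx⟩
    set v : Av n := w - c w 0 • 1 with hv
    have hc : ∀ j, j < n → c v j = c w j - c w 0 * (if j = 0 then 1 else 0) := by
      intro j hj
      rw [hv, sub_eq_add_neg, c_add, c_neg, c_smul, one_def, c_ev_of_lt _ _ hj]; ring
    have hwj : ∀ j (hj2 : j - 1 < 2), j ≠ 0 →
        c w j = (Pi.single (⟨m - 1, ht⟩ : Fin 2) (1:ℝ) : Fin 2 → ℝ) ⟨j - 1, hj2⟩ := by
      intro j hj2 hj0
      rw [← hpw, piP_apply]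
      congr 1
      simp only [Fin.val_mk]
      omega
    refine ⟨v, ?_, ?_, ?_⟩
    · rw [show Nat.fib m = 1 by rcases hm with rfl | rfl <;> rfl]
      exact Submodule.sub_mem _ hwL (Submodule.smul_mem _ _ one_mem_Lspan)
    · intro j hj
      rcases Nat.eq_zero_or_pos j with rfl | hj1
      · rw [hc 0 (by omega), if_pos rfl]; ring
      · have hj' : j = 1 := by omega
        subst hj'
        have hm2 : m = 2 := by omega
        rw [hc 1 (by omega), if_neg (by omega), hwj 1 (by omega) (by omega),
          Pi.single_eq_of_ne]
        · ring
        · intro hcon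
          have := congrArg Fin.val hcon
          simp only [Fin.val_mk] at this
          omega
    · rw [hc m (by omega), if_neg (by omega), hwj m (by omega) (by omega)]
      have heq : (⟨m - 1, by omega⟩ : Fin 2) = ⟨m - 1, ht⟩ := rfl
      rw [heq, Pi.single_eq_same]
      ring
  intro m
  induction m using Nat.strong_induction_on with
  | _ m IH =>
    intro h1 hmn
    by_cases hm2 : m ≤ 2
    · exact base m (by omega)
    · obtain ⟨va, hvaL, hva0, hva1⟩ := IH (m - 2) (by omega) (by omega) (by omega)
      obtain ⟨vb, hvbL, hvb0, hvb1⟩ := IH (m - 1) (by omega) (by omega) (by omega)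
      set w : Av n := va * vb with hw
      have hwL : w ∈ Lspan ℝ S (Nat.fib (m - 2) + Nat.fib (m - 1)) := Lspan_mul_mem hvaL hvbL
      have hfib : Nat.fib (m - 2) + Nat.fib (m - 1) = Nat.fib m := by
        have : m = (m - 2) + 2 := by omega
        rw [this, Nat.fib_add_two]
        congr 1 <;> omega
      have hcw : ∀ j, 1 ≤ j → j ≤ m → j < n →
          c w j = (if 3 ≤ j then c va (j-2) * c vb (j-1) - c va (j-1) * c vb (j-2) else 0) := by
        intro j hj1 hjm hjn
        rw [hw, c_mul _ _ _ hjn, if_neg (by omega),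
          hva0 0 (by omega), hvb0 0 (by omega)]
        ring
      have hwm : c w m = 1 := by
        rw [hcw m (by omega) le_rfl hmn, if_pos (by omega),
          hva1, hvb1, hvb0 (m - 2) (by omega)]
        ring
      have hwj : ∀ j, 1 ≤ j → j < m → c w j = 0 := by
        intro j hj1 hjm
        rw [hcw j hj1 (by omega) (by omega)]
        split_ifs with h3
        · by_cases hlt : j - 1 < m - 2
          · rw [hva0 (j - 2) (by omega), hva0 (j - 1) hlt]; ring
          · rw [hva0 (j - 2) (by omega), hvb0 (j - 2) (by omega)]; ring
        · rfl
      set v : Av n := w - c w 0 • 1 with hv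
      have hcV : ∀ j, j < n → c v j = c w j - c w 0 * (if j = 0 then 1 else 0) := by
        intro j hj
        rw [hv, sub_eq_add_neg, c_add, c_neg, c_smul, one_def, c_ev_of_lt _ _ hj]; ring
      refine ⟨v, ?_, ?_, ?_⟩
      · rw [← hfib]
        exact Submodule.sub_mem _ hwL (Submodule.smul_mem _ _ one_mem_Lspan)
      · intro j hjm
        rcases Nat.eq_zero_or_pos j with rfl | hj1
        · rw [hcV 0 (by omega), if_pos rfl]; ring
        · rw [hcV j (by omega), if_neg (by omega), hwj j hj1 hjm]; ring
      · rw [hcV m hmn, if_neg (by omega), hwm]; ring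

lemma Lspan_top (hn : 2 < n) {S : Set (Av n)}
    (hS : Submodule.span ℝ (piP '' S) = ⊤) :
    Lspan ℝ S (Nat.fib (n - 1)) = ⊤ := by
  classical
  have H := triangular hn hS
  set T := Lspan ℝ S (Nat.fib (n - 1)) with hT
  -- the triangular family
  have exu : ∀ i : Fin n, ∃ u : Av n, u ∈ T ∧ (∀ j, j < i.val → c u j = 0) ∧ c u i.val = 1 := by
    intro i
    rcases Nat.eq_zero_or_pos i.val with h0 | h1
    · refine ⟨1, one_mem_Lspan, ?_, ?_⟩
      · intro j hj; omega
      · rw [h0, one_def, c_ev_of_lt _ _ (by omega)]; simp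
    · obtain ⟨v, hvL, hv0, hv1⟩ := H i.val h1 i.isLt
      refine ⟨v, ?_, hv0, hv1⟩
      exact Lspan_mono (Nat.fib_mono (by omega)) hvL
  choose u huT hu0 hu1 using exu
  have hli : LinearIndependent ℝ u := by
    rw [Fintype.linearIndependent_iff]
    intro g hg
    have key : ∀ m : ℕ, ∀ i : Fin n, i.val = m → g i = 0 := by
      intro m
      induction m using Nat.strong_induction_on with
      | _ m IH =>
        intro i him
        have h2 := congrArg (cL i.val) hg
        rw [map_sum, map_zero] at h2
        rw [Finset.sum_eq_single i] at h2
        · simpa [c_smul, hu1 i] using h2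
        · intro j _ hj
          rcases lt_trichotomy j.val i.val with hlt | heq | hgt
          · rw [← him] at IH
            rw [IH j.val hlt j rfl]
            simp [c_zero]
          · exact absurd (Fin.ext heq) hj
          · simp [c_smul, hu0 j i.val hgt]
        · intro h; exact absurd (Finset.mem_univ _) h
    intro i
    exact key i.val i rfl
  have hcard : n ≤ Module.finrank ℝ T := by
    have hli' : LinearIndependent ℝ (fun i : Fin n => (⟨u i, huT i⟩ : T)) := by
      apply LinearIndependent.of_comp T.subtype
      exact hli
    have := hli'.fintype_card_le_finrank
    simpa using this
  have hle : Module.finrank ℝ T ≤ n := by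
    have := Submodule.finrank_le T
    rwa [finrank_eq] at this
  exact Submodule.eq_top_of_finrank_eq (by rw [finrank_eq]; omega)

lemma len_le (hn : 2 < n) {S : Set (Av n)} (hgen : Generates ℝ S) :
    len ℝ S ≤ Nat.fib (n - 1) :=
  Nat.sInf_le (Lspan_top hn (piP_span_top hn hgen))

lemma gen_of_Lspan_top {S : Set (Av n)} {k : ℕ} (h : Lspan ℝ S k = ⊤) :
    Generates ℝ S := by
  rw [Generates, eq_top_iff, ← h]
  exact le_iSup (fun k => Lspan ℝ S k) k

end Av

namespace Av
variable {n : ℕ}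

/-- Fibonacci-weight filtration subspaces. -/
def Wgen (k : ℕ) : Set (Av n) := {1} ∪ {x | ∃ m, 1 ≤ m ∧ Nat.fib m ≤ k ∧ x = ev m}

noncomputable def Wsub (k : ℕ) : Submodule ℝ (Av n) := Submodule.span ℝ (Wgen k)

lemma Wsub_mono {k k' : ℕ} (h : k ≤ k') : (Wsub k : Submodule ℝ (Av n)) ≤ Wsub k' := by
  apply Submodule.span_mono
  rintro x (rfl | ⟨m, h1, h2, rfl⟩)
  · exact Or.inl rfl
  · exact Or.inr ⟨m, h1, h2.trans h, rfl⟩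

lemma one_mem_Wsub {k : ℕ} : (1 : Av n) ∈ Wsub k :=
  Submodule.subset_span (Or.inl rfl)

lemma W_mul {p q : ℕ} {x y : Av n} (hx : x ∈ Wsub p) (hy : y ∈ Wsub q) :
    x * y ∈ (Wsub (p + q) : Submodule ℝ (Av n)) := by
  have key : ∀ a ∈ Wgen (n := n) p, ∀ b ∈ Wgen (n := n) q, a * b ∈ (Wsub (p + q) : Submodule ℝ (Av n)) := by
    rintro a (rfl | ⟨m₁, hm₁, hf₁, rfl⟩) b (rfl | ⟨m₂, hm₂, hf₂, rfl⟩)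
    · rw [one_mul]; exact one_mem_Wsub
    · rw [one_mul]
      exact Submodule.subset_span (Or.inr ⟨m₂, hm₂, hf₂.trans (Nat.le_add_left _ _), rfl⟩)
    · rw [mul_one]
      exact Submodule.subset_span (Or.inr ⟨m₁, hm₁, hf₁.trans (Nat.le_add_right _ _), rfl⟩)
    · by_cases h₁ : m₁ < n
      · by_cases h₂ : m₂ < n
        · rw [ev_mul_ev m₁ m₂ hm₁ h₁ hm₂ h₂]
          split_ifs with e1 e2 e3
          · exact Submodule.neg_mem _ one_mem_Wsub
          · refine Submodule.subset_span (Or.inr ⟨m₁ + 2, by omega, ?_, rfl⟩)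
            obtain ⟨rfl, -⟩ := e2
            rw [Nat.fib_add_two]
            omega
          · refine Submodule.neg_mem _ (Submodule.subset_span (Or.inr ⟨m₂ + 2, by omega, ?_, rfl⟩))
            obtain ⟨rfl, -⟩ := e3
            rw [Nat.fib_add_two]
            omega
          · exact Submodule.zero_mem _
        · rw [show (ev m₂ : Av n) = 0 from ev_eq_zero (by omega), mul_zero]
          exact Submodule.zero_mem _
      · rw [ev_eq_zero (le_of_not_gt h₁), zero_mul]; exact Submodule.zero_mem _
  have inner : ∀ a ∈ Wgen (n := n) p, ∀ y ∈ (Wsub q : Submodule ℝ (Av n)),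
      a * y ∈ (Wsub (p + q) : Submodule ℝ (Av n)) := by
    intro a ha y hy
    refine Submodule.span_induction (fun b hb => key a ha b hb) ?_ ?_ ?_ hy
    · rw [mul_zero]; exact Submodule.zero_mem _
    · intro u v _ _ hu hv; rw [mul_add]; exact Submodule.add_mem _ hu hv
    · intro r u _ hu; rw [mul_smul_comm]; exact Submodule.smul_mem _ _ hu
  refine Submodule.span_induction (fun a ha => inner a ha y hy) ?_ ?_ ?_ hx
  · rw [zero_mul]; exact Submodule.zero_mem _
  · intro u v _ _ hu hv; rw [add_mul]; exact Submodule.add_mem _ hu hv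
  · intro r u _ hu; rw [smul_mul_assoc]; exact Submodule.smul_mem _ _ hu

lemma word_mem_W {k : ℕ} {a : Av n} (h : IsWord ({ev 1, ev 2} : Set (Av n)) k a) :
    a ∈ (Wsub k : Submodule ℝ (Av n)) := by
  induction h with
  | one => exact one_mem_Wsub
  | base a ha =>
    rcases ha with rfl | rfl
    · exact Submodule.subset_span (Or.inr ⟨1, le_rfl, by simp, rfl⟩)
    · exact Submodule.subset_span (Or.inr ⟨2, by omega, by simp, rfl⟩)
  | mul hp hq hwa hwb iha ihb => exact W_mul iha ihb

lemma Lspan_le_W (k : ℕ) :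
    Lspan ℝ ({ev 1, ev 2} : Set (Av n)) k ≤ Wsub k := by
  rw [Lspan, Submodule.span_le]
  rintro a ⟨m, hm, hw⟩
  exact Wsub_mono hm (word_mem_W hw)

lemma ev_not_mem_W (hn : 2 < n) {k : ℕ} (hk : k < Nat.fib (n - 1)) :
    (ev (n - 1) : Av n) ∉ (Wsub k : Submodule ℝ (Av n)) := by
  intro hmem
  have hker : (Wsub k : Submodule ℝ (Av n)) ≤ LinearMap.ker (cL (n - 1)) := by
    rw [Wsub, Submodule.span_le]
    rintro x (rfl | ⟨m, h1, h2, rfl⟩)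
    · rw [SetLike.mem_coe, LinearMap.mem_ker, cL_apply, one_def, c_ev, if_neg]
      rintro ⟨h, -⟩; omega
    · rw [SetLike.mem_coe, LinearMap.mem_ker, cL_apply, c_ev, if_neg]
      rintro ⟨rfl, -⟩
      omega
  have h1 := hker hmem
  rw [LinearMap.mem_ker, cL_apply, c_ev_of_lt _ _ (by omega), if_pos rfl] at h1
  norm_num at h1

lemma piP_S0_top (hn : 2 < n) :
    Submodule.span ℝ (piP '' ({ev 1, ev 2} : Set (Av n))) = ⊤ := by
  have h1 : piP (ev 1 : Av n) = Pi.single (0 : Fin 2) (1:ℝ) := by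
    funext j
    rcases j with ⟨jv, hj⟩
    rw [piP_apply]
    simp only [Fin.val_mk]
    interval_cases jv
    · rw [c_ev, if_pos ⟨rfl, by omega⟩]
      simp [Pi.single_apply]
    · rw [c_ev, if_neg (by omega)]
      simp [Pi.single_apply]
  have h2 : piP (ev 2 : Av n) = Pi.single (1 : Fin 2) (1:ℝ) := by
    funext j
    rcases j with ⟨jv, hj⟩
    rw [piP_apply]
    simp only [Fin.val_mk]
    interval_cases jv
    · rw [c_ev, if_neg (by omega)]
      simp [Pi.single_apply]
    · rw [c_ev, if_pos ⟨rfl, by omega⟩]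
      simp [Pi.single_apply]
  rw [eq_top_iff]
  intro x _
  have hx : x = x 0 • (Pi.single (0 : Fin 2) (1:ℝ) : Fin 2 → ℝ)
      + x 1 • (Pi.single (1 : Fin 2) (1:ℝ) : Fin 2 → ℝ) := by
    funext j; fin_cases j <;> simp
  rw [hx, ← h1, ← h2]
  exact Submodule.add_mem _
    (Submodule.smul_mem _ _ (Submodule.subset_span ⟨ev 1, Or.inl rfl, rfl⟩))
    (Submodule.smul_mem _ _ (Submodule.subset_span ⟨ev 2, Or.inr rfl, rfl⟩))

lemma len_S0 (hn : 2 < n) :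
    len ℝ ({ev 1, ev 2} : Set (Av n)) = Nat.fib (n - 1) := by
  have htop := Lspan_top hn (piP_S0_top hn)
  have hmem : Nat.fib (n - 1) ∈ {k | Lspan ℝ ({ev 1, ev 2} : Set (Av n)) k = ⊤} := htop
  apply le_antisymm (Nat.sInf_le htop)
  apply le_csInf ⟨_, hmem⟩
  intro b hb
  by_contra hlt
  push_neg at hlt
  have hne : (ev (n - 1) : Av n) ∈ Lspan ℝ ({ev 1, ev 2} : Set (Av n)) b := by
    rw [Set.mem_setOf_eq] at hb
    rw [hb]; trivial
  exact ev_not_mem_W hn hlt (Lspan_le_W b hne)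

lemma algLen_eq (hn : 2 < n) : algLen ℝ (Av n) = Nat.fib (n - 1) := by
  have htop := Lspan_top hn (piP_S0_top hn)
  have hmem : Nat.fib (n - 1) ∈ {l | ∃ S : Set (Av n), S.Finite ∧ Generates ℝ S ∧ len ℝ S = l} :=
    ⟨{ev 1, ev 2}, Set.toFinite _, gen_of_Lspan_top htop, len_S0 hn⟩
  have hub : ∀ l ∈ {l | ∃ S : Set (Av n), S.Finite ∧ Generates ℝ S ∧ len ℝ S = l},
      l ≤ Nat.fib (n - 1) := by
    rintro l ⟨S, hf, hg, rfl⟩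
    exact len_le hn hg
  exact le_antisymm (csSup_le ⟨_, hmem⟩ hub) (le_csSup ⟨_, hub⟩ hmem)

end Av

theorem stmt_19 (n : ℕ) (hn : 2 < n) :
    ∃ (Wit : AlgWitness ℝ) (e : ℕ → Wit.carrier),
      Module.finrank ℝ Wit.carrier = n ∧
      e 0 = 1 ∧
      LinearIndependent ℝ (fun i : Fin n => e i.val) ∧
      Submodule.span ℝ (Set.range (fun i : Fin n => e i.val)) = ⊤ ∧
      (∀ k, 1 ≤ k → k ≤ n - 3 →
        e k * e (k + 1) = e (k + 2) ∧ e (k + 1) * e k = -(e (k + 2))) ∧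
      (∀ i, 1 ≤ i → i ≤ n - 1 → e i * e i = -1) ∧
      (∀ p q, 1 ≤ p → p ≤ n - 1 → 1 ≤ q → q ≤ n - 1 → p ≠ q →
        ¬(q = p + 1 ∧ p ≤ n - 3) → ¬(p = q + 1 ∧ q ≤ n - 3) → e p * e q = 0) ∧
      LocallyComplex Wit.carrier ∧
      algLen ℝ Wit.carrier = Nat.fib (n - 1) := by
  refine ⟨⟨Av n⟩, fun m => Av.ev m, ?_, ?_, ?_, ?_, ?_, ?_, ?_, ?_, ?_⟩
  · exact Av.finrank_eq
  · rfl
  · exact Av.ev_linearIndependent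
  · exact Av.ev_span_top
  · intro k hk1 hk3
    constructor
    · show (Av.ev k : Av n) * Av.ev (k + 1) = Av.ev (k + 2)
      rw [Av.ev_mul_ev k (k+1) hk1 (by omega) (by omega) (by omega),
        if_neg (by omega), if_pos ⟨rfl, by omega⟩]
    · show (Av.ev (k + 1) : Av n) * Av.ev k = -(Av.ev (k + 2))
      rw [Av.ev_mul_ev (k+1) k (by omega) (by omega) hk1 (by omega),
        if_neg (by omega), if_neg (by omega), if_pos ⟨rfl, by omega⟩]
  · intro i h1 h2
    show (Av.ev i : Av n) * Av.ev i = -1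
    rw [Av.ev_mul_ev i i h1 (by omega) h1 (by omega), if_pos rfl]
  · intro p q hp1 hp2 hq1 hq2 hpq hq' hp'
    show (Av.ev p : Av n) * Av.ev q = 0
    rw [Av.ev_mul_ev p q hp1 (by omega) hq1 (by omega), if_neg hpq,
      if_neg (by rintro ⟨rfl, h⟩; exact hq' ⟨rfl, by omega⟩),
      if_neg (by rintro ⟨rfl, h⟩; exact hp' ⟨rfl, by omega⟩)]
  · show LocallyComplex (Av n)
    exact ⟨inferInstance, Av.quadratic, Av.no_idem (by omega), Av.no_sqzero (by omega)⟩
  · show algLen ℝ (Av n) = Nat.fib (n - 1)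
    exact Av.algLen_eq hn
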